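/- arXiv:2201.02219 — 3 statements merged into one kernel-verified Lean document; each statement's English description precedes it below -/
import Mathlib

section
/- A subset A of a Banach lattice E satisfies A ⊆ [-u,u] + εB_E (where B_E is the closed unit ball) if and only if sup_{x∈A} ‖(|x| - u)⁺‖ ≤ ε. -/
open Filter Topology Pointwise NormedSpace

variable {E F G : Type*}

/-- A set is relatively weakly compact if its closure in the weak topology is compact. -/
def RelWeaklyCompact (E : Type*) [NormedAddCommGroup E] [NormedSpace ℝ E] (A : Set E) : Prop :=
  IsCompact (closure ((toWeakSpace ℝ E) '' A))

section Defs
variable (E) [NormedAddCommGroup E] [Lattice E] [HasSolidNorm E] [IsOrderedAddMonoid E] [NormedSpace ℝ E]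

/-- A set is almost order bounded if for every `ε > 0` it is contained in
`[-u,u] + ε B_E` for some positive `u`. -/
def AlmostOrderBounded (A : Set E) : Prop :=
  ∀ ε : ℝ, 0 < ε → ∃ u : E, 0 ≤ u ∧ A ⊆ Set.Icc (-u) u + Metric.closedBall (0 : E) ε

/-- The norm is order continuous: every antitone net with infimum `0` is norm null. -/
def OrderContinuousNorm : Prop :=
  ∀ {ι : Type} [Nonempty ι] [SemilatticeSup ι] (x : ι → E),
    Antitone x → IsGLB (Set.range x) 0 →
      Tendsto (fun i => ‖x i‖) atTop (nhds 0)

/-- `e` is an order unit. -/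
def IsOrderUnit (e : E) : Prop :=
  0 < e ∧ ∀ x : E, 0 ≤ x → ∃ n : ℕ, x ≤ n • e

/-- Dedekind complete: every nonempty set bounded above has a supremum. -/
def DedekindComplete : Prop :=
  ∀ s : Set E, s.Nonempty → BddAbove s → ∃ a, IsLUB s a

/-- KB-space: every increasing norm bounded sequence of positives is norm convergent. -/
def KBSpace : Prop :=
  ∀ x : ℕ → E, Monotone x → (∀ n, 0 ≤ x n) → (∃ C, ∀ n, ‖x n‖ ≤ C) →
    ∃ y, Tendsto x atTop (nhds y)

/-- AL-space: additive norm on disjoint positive elements. -/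
def IsALSpace : Prop :=
  ∀ x y : E, 0 ≤ x → 0 ≤ y → x ⊓ y = 0 → ‖x + y‖ = ‖x‖ + ‖y‖

/-- `e` is a weak unit. -/
def IsWeakUnit (e : E) : Prop :=
  0 < e ∧ ∀ x : E, 0 ≤ x → IsLUB (Set.range fun n : ℕ => x ⊓ n • e) x

/-- Grothendieck space: weak* convergent sequences in the dual are weakly convergent. -/
def GrothendieckSpace (X : Type*) [NormedAddCommGroup X] [NormedSpace ℝ X] : Prop :=
  ∀ (f : ℕ → StrongDual ℝ X) (g : StrongDual ℝ X),
    (∀ x : X, Tendsto (fun n => f n x) atTop (nhds (g x))) →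
    ∀ Φ : StrongDual ℝ (StrongDual ℝ X), Tendsto (fun n => Φ (f n)) atTop (nhds (Φ g))

end Defs

section OpDefs
variable [NormedAddCommGroup E] [Lattice E] [HasSolidNorm E] [IsOrderedAddMonoid E] [NormedSpace ℝ E]
variable [NormedAddCommGroup F] [Lattice F] [HasSolidNorm F] [IsOrderedAddMonoid F] [NormedSpace ℝ F]

/-- An operator is almost order bounded if it maps almost order bounded sets to
almost order bounded sets. -/
def AlmostOrderBoundedOp (T : E →L[ℝ] F) : Prop :=
  ∀ A : Set E, AlmostOrderBounded E A → AlmostOrderBounded F (T '' A)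

/-- An operator is almost order-weakly compact if it maps almost order bounded sets to
relatively weakly compact sets. -/
def AoWc (T : E →L[ℝ] F) : Prop :=
  ∀ A : Set E, AlmostOrderBounded E A → RelWeaklyCompact F (T '' A)

/-- Weakly compact operator. -/
def WeaklyCompactOp (T : E →L[ℝ] F) : Prop :=
  RelWeaklyCompact F (T '' Metric.closedBall 0 1)

/-- Order weakly compact operator. -/
def OrderWeaklyCompactOp (T : E →L[ℝ] F) : Prop :=
  ∀ x : E, 0 ≤ x → RelWeaklyCompact F (T '' Set.Icc 0 x)

/-- Order bounded operator: maps order bounded sets to order bounded sets. -/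
def OrderBoundedOp (T : E →L[ℝ] F) : Prop :=
  ∀ s : Set E, BddBelow s → BddAbove s → BddBelow (T '' s) ∧ BddAbove (T '' s)

/-- Semicompact operator. -/
def SemicompactOp (T : E →L[ℝ] F) : Prop :=
  ∀ ε : ℝ, 0 < ε → ∃ u : F, 0 ≤ u ∧ ∀ x ∈ Metric.closedBall (0 : E) 1, ‖(|T x| - u)⁺‖ ≤ ε

/-- M-weakly compact operator. -/
def MWeaklyCompactOp (T : E →L[ℝ] F) : Prop :=
  ∀ x : ℕ → E, (∃ C, ∀ n, ‖x n‖ ≤ C) →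
    (Pairwise fun n m => |x n| ⊓ |x m| = 0) →
    Tendsto (fun n => ‖T (x n)‖) atTop (nhds 0)

/-- L-weakly compact operator. -/
def LWeaklyCompactOp (T : E →L[ℝ] F) : Prop :=
  ∀ y : ℕ → F, (∀ n, ∃ w ∈ T '' Metric.closedBall (0 : E) 1, |y n| ≤ |w|) →
    (Pairwise fun n m => |y n| ⊓ |y m| = 0) →
    Tendsto (fun n => ‖y n‖) atTop (nhds 0)

/-- Positive operator. -/
def PositiveOp (T : E →L[ℝ] F) : Prop := ∀ x : E, 0 ≤ x → 0 ≤ T x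

/-- Lattice homomorphism. -/
def LatticeHomOp (T : E →L[ℝ] F) : Prop := ∀ x y : E, T (x ⊔ y) = T x ⊔ T y

/-- `S` is the modulus of `T`: the least upper bound of `T` and `-T` in the operator order. -/
def IsModulus (T S : E →L[ℝ] F) : Prop :=
  (∀ x : E, 0 ≤ x → T x ≤ S x ∧ -T x ≤ S x) ∧
  ∀ R : E →L[ℝ] F, (∀ x : E, 0 ≤ x → T x ≤ R x ∧ -T x ≤ R x) →
    ∀ x : E, 0 ≤ x → S x ≤ R x

end OpDefs

theorem stmt0 [NormedAddCommGroup E] [Lattice E] [HasSolidNorm E] [IsOrderedAddMonoid E] [NormedSpace ℝ E] [CompleteSpace E] (A : Set E) (u : E) (hu : 0 ≤ u) (ε : ℝ) (hε : 0 < ε) :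
    A ⊆ Set.Icc (-u) u + Metric.closedBall (0 : E) ε ↔ ∀ x ∈ A, ‖(|x| - u)⁺‖ ≤ ε := by
  constructor
  · intro hA x hx
    obtain ⟨a, ha, b, hb, rfl⟩ := hA hx
    have hau : |a| ≤ u := abs_le'.2 ⟨ha.2, neg_le.2 ha.1⟩
    have h1 : |a + b| - u ≤ |b| :=
      sub_le_iff_le_add.2 ((abs_add_le a b).trans (by calc |a| + |b| ≤ u + |b| := add_le_add_left hau _
          _ = |b| + u := add_comm _ _))
    have h2 : (|a + b| - u)⁺ ≤ |b| :=
      (posPart_mono h1).trans_eq (posPart_eq_self.2 (abs_nonneg b))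
    have h3 : ‖(|a + b| - u)⁺‖ ≤ ‖b‖ := by
      rw [← norm_abs_eq_norm b]
      exact HasSolidNorm.solid (by rwa [abs_of_nonneg (posPart_nonneg _), abs_abs])
    exact h3.trans (by simpa [mem_closedBall_zero_iff] using hb)
  · intro h x hx
    set a := (x ⊓ u) ⊔ (-u) with ha_def
    have hb1 : x - a ≤ (|x| - u)⁺ := by
      have : x - a ≤ x - (x ⊓ u) := sub_le_sub_left le_sup_left x
      calc x - a ≤ x - (x ⊓ u) := this
        _ = (x - x) ⊔ (x - u) := by rw [sub_inf]
        _ = (x - u)⁺ := by rw [sub_self, sup_comm]; rfl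
        _ ≤ (|x| - u)⁺ := posPart_mono (by gcongr; exact le_abs_self x)
    have hb2 : a - x ≤ (|x| - u)⁺ := by
      have : a - x = ((x ⊓ u) - x) ⊔ (-u - x) := by rw [ha_def, sup_sub]
      rw [this]
      refine sup_le ((sub_nonpos.2 inf_le_left).trans (posPart_nonneg _)) ?_
      calc -u - x = -x - u := by abel
        _ ≤ |x| - u := sub_le_sub_right (neg_le_abs x) _
        _ ≤ (|x| - u)⁺ := le_posPart _
    have habs : |x - a| ≤ (|x| - u)⁺ := abs_le'.2 ⟨hb1, by rwa [neg_sub]⟩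
    refine ⟨a, ⟨le_sup_right, sup_le inf_le_right ((neg_nonpos.2 hu).trans hu)⟩, x - a, ?_, by show a + (x - a) = x; abel⟩
    rw [mem_closedBall_zero_iff]
    calc ‖x - a‖ ≤ ‖(|x| - u)⁺‖ :=
          HasSolidNorm.solid (by rwa [abs_of_nonneg (posPart_nonneg _)])
      _ ≤ ε := h x hx
end

section
/- Every semicompact operator T : E → F between Banach lattices is almost order bounded (i.e., maps almost order bounded sets to almost order bounded sets). -/
open Filter Topology Pointwise NormedSpace

variable {E F G : Type*}

private theorem trunc {F : Type*} [NormedAddCommGroup F] [Lattice F] [IsOrderedAddMonoid F] [HasSolidNorm F] (y u : F) (hu : 0 ≤ u) :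
    -u ≤ (y ⊓ u) ⊔ (-u) ∧ (y ⊓ u) ⊔ (-u) ≤ u ∧
      |y - ((y ⊓ u) ⊔ (-u))| ≤ (|y| - u)⁺ := by
  refine ⟨le_sup_right, sup_le (inf_le_right) (neg_le_self hu), ?_⟩
  rw [abs_le']
  constructor
  · calc y - ((y ⊓ u) ⊔ (-u)) ≤ y - (y ⊓ u) := sub_le_sub_left le_sup_left y
    _ = (y - y) ⊔ (y - u) := by rw [sub_inf]
    _ = (y - u)⁺ := by simp [posPart_def, sup_comm]
    _ ≤ (|y| - u)⁺ := sup_le (le_sup_of_le_left (sub_le_sub_right (le_abs_self y) u)) le_sup_right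
  · rw [neg_sub]
    calc ((y ⊓ u) ⊔ (-u)) - y = ((y ⊓ u) - y) ⊔ ((-u) - y) := by rw [sup_sub]
    _ ≤ (|y| - u)⁺ := by
        apply sup_le
        · exact le_trans (by simp) le_sup_right
        · calc -u - y = -y - u := by abel
          _ ≤ |y| - u := sub_le_sub_right (neg_le_abs y) u
          _ ≤ (|y| - u)⁺ := le_sup_left

theorem stmt2 [NormedAddCommGroup E] [Lattice E] [IsOrderedAddMonoid E] [HasSolidNorm E] [NormedSpace ℝ E] [CompleteSpace E] [NormedAddCommGroup F] [Lattice F] [IsOrderedAddMonoid F] [HasSolidNorm F] [NormedSpace ℝ F] [CompleteSpace F] (T : E →L[ℝ] F)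
    (hT : SemicompactOp T) : AlmostOrderBoundedOp T := by
  intro A hA ε hε
  obtain ⟨v, hv, hAv⟩ := hA 1 one_pos
  -- norm bound on A
  have hbound : ∀ x ∈ A, ‖x‖ ≤ ‖v‖ + 1 := by
    intro x hx
    obtain ⟨a, ha, b, hb, rfl⟩ := hAv hx
    have hav : ‖a‖ ≤ ‖v‖ := by
      apply HasSolidNorm.solid
      rw [abs_of_nonneg hv]
      exact abs_le'.mpr ⟨ha.2, neg_le.mp ha.1⟩
    have hbn : ‖b‖ ≤ 1 := by simpa using hb
    calc ‖a + b‖ ≤ ‖a‖ + ‖b‖ := norm_add_le a b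
      _ ≤ ‖v‖ + 1 := add_le_add hav hbn
  obtain ⟨n, hn⟩ := exists_nat_ge (‖v‖ + 1)
  have hn1 : 1 ≤ n := by
    by_contra h
    push_neg at h
    interval_cases n
    simp at hn
    nlinarith [norm_nonneg v]
  have hnpos : (0:ℝ) < n := by exact_mod_cast hn1
  obtain ⟨u, hu, hsemi⟩ := hT (ε / n) (by positivity)
  refine ⟨n • u, nsmul_nonneg hu n, ?_⟩
  rintro _ ⟨x, hx, rfl⟩
  set z : E := (n : ℝ)⁻¹ • x with hz
  have hzball : z ∈ Metric.closedBall (0 : E) 1 := by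
    simp only [Metric.mem_closedBall, dist_zero_right, hz, norm_smul, norm_inv,
      Real.norm_natCast]
    rw [inv_mul_le_iff₀ hnpos, mul_one]
    exact (hbound x hx).trans hn
  have hxz : x = n • z := by
    rw [hz, ← Nat.cast_smul_eq_nsmul ℝ, smul_smul, mul_inv_cancel₀ (ne_of_gt hnpos), one_smul]
  obtain ⟨h1, h2, h3⟩ := trunc (T z) u hu
  set y₁ := ((T z) ⊓ u) ⊔ (-u) with hy₁
  set y₂ := T z - y₁ with hy₂
  have hTz : ‖(|T z| - u)⁺‖ ≤ ε / n := hsemi z hzball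
  have hy2norm : ‖y₂‖ ≤ ε / n := by
    refine le_trans ?_ hTz
    apply HasSolidNorm.solid
    rwa [abs_of_nonneg (posPart_nonneg _)]
  have hlow : -(n • u) ≤ n • y₁ := by
    have := nsmul_le_nsmul_right h1 n
    simpa [smul_neg] using this
  refine Set.mem_add.mpr ⟨n • y₁, ⟨hlow, nsmul_le_nsmul_right h2 n⟩, n • y₂, ?_, ?_⟩
  · simp only [Metric.mem_closedBall, dist_zero_right]
    calc ‖n • y₂‖ ≤ n * ‖y₂‖ := by
          simpa using norm_nsmul_le (n := n) (a := y₂)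
      _ ≤ n * (ε / n) := by
          exact mul_le_mul_of_nonneg_left hy2norm hnpos.le
      _ = ε := by field_simp
  · rw [hxz, map_nsmul, ← smul_add]
    congr 1
    rw [hy₂]; abel
end

section
/- Every surjective lattice homomorphism T : E → F between Banach lattices is almost order bounded. -/
open Filter Topology Pointwise NormedSpace

variable {E F G : Type*}

theorem stmt5 [NormedAddCommGroup E] [Lattice E] [HasSolidNorm E] [IsOrderedAddMonoid E] [NormedSpace ℝ E] [CompleteSpace E] [NormedAddCommGroup F] [Lattice F] [HasSolidNorm F] [IsOrderedAddMonoid F] [NormedSpace ℝ F] [CompleteSpace F] (T : E →L[ℝ] F)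
    (hhom : LatticeHomOp T) (hsurj : Function.Surjective T) : AlmostOrderBoundedOp T := by
  intro A hA ε hε
  have hpos : ∀ x : E, 0 ≤ x → 0 ≤ T x := by
    intro x hx
    have h := hhom x 0
    rw [sup_eq_left.mpr hx, map_zero] at h
    rw [h]; exact le_sup_right
  have hmono : ∀ x y : E, x ≤ y → T x ≤ T y := by
    intro x y hxy
    have h := hpos (y - x) (sub_nonneg.mpr hxy)
    rw [map_sub] at h
    exact sub_nonneg.mp h
  have hδ : 0 < ε / (‖T‖ + 1) := by positivity
  obtain ⟨u, hu, hsub⟩ := hA (ε / (‖T‖ + 1)) hδ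
  refine ⟨T u, hpos u hu, ?_⟩
  rintro y ⟨x, hx, rfl⟩
  obtain ⟨a, ha, b, hb, hab⟩ := Set.mem_add.mp (hsub hx)
  refine Set.mem_add.mpr ⟨T a, ⟨?_, ?_⟩, T b, ?_, by rw [← map_add, hab]⟩
  · rw [show -T u = T (-u) by rw [map_neg]]
    exact hmono _ _ ha.1
  · exact hmono _ _ ha.2
  · rw [Metric.mem_closedBall, dist_zero_right]
    calc ‖T b‖ ≤ ‖T‖ * ‖b‖ := T.le_opNorm b
    _ ≤ ‖T‖ * (ε / (‖T‖ + 1)) := by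
        apply mul_le_mul_of_nonneg_left _ (norm_nonneg T)
        simpa [dist_zero_right] using Metric.mem_closedBall.mp hb
    _ ≤ ε := by
        rw [mul_div_assoc', div_le_iff₀ (by positivity)]
        nlinarith [norm_nonneg T]
end
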